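/- The vector w ∈ ℚ^S defined by w_{C_a} = φ(p^{min(a,n−a)}) (φ = Euler's totient), w_{E_a} = φ(p^{min(a,n−a)})/2 and w_{F_a} = φ(p^{min(a,n−a)})/3 satisfies A'·w = 0; that is, the vector of multiplicities of the components of the special fibre of the minimal regular model of X₀(pⁿ) (n even) lies in the kernel of its intersection matrix. -/

import Mathlib

open Finset

/-- Index type for the components of the special fibre of the minimal regular model of
`X₀(pⁿ)` with `n` even: Igusa components `C a` and extra components `E a`, `F a`. -/
inductive Idx2 where
  | C : ℕ → Idx2
  | E : ℕ → Idx2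
  | F : ℕ → Idx2
deriving DecidableEq

/-- The intersection matrix `A'` of the special fibre at `p` of the minimal regular model of
`X₀(pⁿ)` for `n` even, obtained from the Edixhoven model by three blow-downs. -/
def matA' (p n : ℕ) : Idx2 → Idx2 → ℚ := fun Γ Γ' =>
  let ξ1 : ℚ := if p % 4 = 1 then 0 else 1
  let ξ3 : ℚ := if p % 3 = 1 then 0 else 1
  let k : ℚ := ((p : ℚ) - 1) / 12 - ξ1 / 2 - ξ3 / 3
  let s : ℕ → ℤ := fun a => (n : ℤ) - 2 * a
  let A0 : ℕ → ℕ → ℚ := fun a a' =>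
    if a = a' then
      if a = 0 ∨ a = n then -(p : ℚ) ^ (n - 1) * ((p : ℚ) - 1) / 12 - ξ1 / 2 - ξ3 / 3
      else -(p : ℚ) ^ (s a).natAbs / 6 - 1 / 2 - 1 / 3
    else
      if 0 < s a * s a' then
        k * (p : ℚ) ^ min (s a).natAbs (s a').natAbs
          + ξ1 * ((p : ℚ) ^ min (s a).natAbs (s a').natAbs - 1) / 2
          + ξ3 * ((p : ℚ) ^ min (s a).natAbs (s a').natAbs - 1) / 3
      else k
  match Γ, Γ' with
  | Idx2.C a, Idx2.C a' =>
      A0 a a' + 6 * k ^ 2 + (6 * k + 2) * ξ1 + (4 * k + 1) * ξ3 + 2 * ξ1 * ξ3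
  | Idx2.C a, Idx2.E a' => if a = a' then 1 else 0
  | Idx2.E a', Idx2.C a => if a = a' then 1 else 0
  | Idx2.C a, Idx2.F a' => if a = a' then 1 else 0
  | Idx2.F a', Idx2.C a => if a = a' then 1 else 0
  | Idx2.E a, Idx2.E a' => if a = a' then -2 else 0
  | Idx2.F a, Idx2.F a' => if a = a' then -3 else 0
  | Idx2.E _, Idx2.F _ => 0
  | Idx2.F _, Idx2.E _ => 0

/-- The index set of the components of the special fibre of the minimal regular model of
`X₀(pⁿ)`, `n` even: `C a` for `a ∈ {0,…,n}∖{n/2}`, `E a` for `a ∈ {1,…,n−1}∖{n/2}` if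
`p ≡ 1 (mod 4)`, and `F a` for `a ∈ {1,…,n−1}∖{n/2}` if `p ≡ 1 (mod 3)`. -/
def Sset2 (p n : ℕ) : Finset Idx2 :=
  ((Finset.range (n + 1)).erase (n / 2)).image Idx2.C
    ∪ (if p % 4 = 1 then ((Finset.Icc 1 (n - 1)).erase (n / 2)).image Idx2.E else ∅)
    ∪ (if p % 3 = 1 then ((Finset.Icc 1 (n - 1)).erase (n / 2)).image Idx2.F else ∅)

/-- The vector of multiplicities of the components of the special fibre. -/
def wvec2 (p n : ℕ) : Idx2 → ℚ
  | Idx2.C a => (Nat.totient (p ^ min a (n - a)) : ℚ)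
  | Idx2.E a => (Nat.totient (p ^ min a (n - a)) : ℚ) / 2
  | Idx2.F a => (Nat.totient (p ^ min a (n - a)) : ℚ) / 3

section helpers

open Finset

/-- Cast of totient of a prime power. -/
lemma tot_cast {p : ℕ} (hp : p.Prime) (j : ℕ) :
    ((p ^ (j+1)).totient : ℚ) = (p:ℚ)^(j+1) - (p:ℚ)^j := by
  rw [Nat.totient_prime_pow hp (Nat.succ_pos j)]
  have h1 : (1:ℕ) ≤ p := hp.one_lt.le
  push_cast [Nat.cast_sub h1]
  ring

/-- Geometric sum of totients of prime powers. -/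
lemma tot_sum {p : ℕ} (hp : p.Prime) (M : ℕ) :
    ∑ b ∈ Finset.range (M+1), ((p ^ b).totient : ℚ) = (p:ℚ)^M := by
  induction M with
  | zero => simp
  | succ M ih => rw [Finset.sum_range_succ, ih, tot_cast hp]; ring

/-- The key telescoping sum. -/
lemma lemB {p : ℕ} (hp : p.Prime) (b L : ℕ) :
    ∑ b' ∈ Finset.range (b+1+L), ((p:ℚ)^(2*(b+1+L - max b b')) - 1) * ((p^b').totient : ℚ)
      = (p:ℚ)^(b+2+2*L) + (p:ℚ)^(b+1+2*L) - (p:ℚ)^(b+1+L) - (p:ℚ)^(b+L) := by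
  rw [Finset.range_eq_Ico,
    ← Finset.sum_Ico_consecutive _ (Nat.zero_le (b+1)) (by omega : b+1 ≤ b+1+L)]
  have h1 : ∑ b' ∈ Finset.Ico 0 (b+1), ((p:ℚ)^(2*(b+1+L - max b b')) - 1) * ((p^b').totient : ℚ)
      = ((p:ℚ)^(2*(1+L)) - 1) * (p:ℚ)^b := by
    rw [← Finset.range_eq_Ico]
    have pt : ∀ b' ∈ Finset.range (b+1),
        ((p:ℚ)^(2*(b+1+L - max b b')) - 1) * ((p^b').totient : ℚ)
        = ((p:ℚ)^(2*(1+L)) - 1) * ((p^b').totient : ℚ) := by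
      intro b' hb'
      rw [Finset.mem_range] at hb'
      rw [show 2*(b+1+L - max b b') = 2*(1+L) from by omega]
    rw [Finset.sum_congr rfl pt, ← Finset.mul_sum, tot_sum hp]
  have h2 : ∑ b' ∈ Finset.Ico (b+1) (b+1+L),
      ((p:ℚ)^(2*(b+1+L - max b b')) - 1) * ((p^b').totient : ℚ)
      = (p:ℚ)^(b+1+2*L) - (p:ℚ)^(b+1+L) - ((p:ℚ)^(b+L) - (p:ℚ)^b) := by
    rw [Finset.sum_Ico_eq_sum_range, show b+1+L - (b+1) = L from by omega]
    have key : ∀ i ∈ Finset.range L,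
        ((p:ℚ)^(2*(b+1+L - max b (b+1+i))) - 1) * ((p^(b+1+i)).totient : ℚ)
        = (((fun i => (p:ℚ)^(b+1+2*L-i)) i - (fun i => (p:ℚ)^(b+1+2*L-i)) (i+1))
          - ((fun i => (p:ℚ)^(b+i)) (i+1) - (fun i => (p:ℚ)^(b+i)) i)) := by
      intro i hi
      rw [Finset.mem_range] at hi
      obtain ⟨j, rfl⟩ : ∃ j, L = i + j + 1 := ⟨L - i - 1, by omega⟩
      show ((p:ℚ)^(2*(b+1+(i+j+1) - max b (b+1+i))) - 1) * ((p^(b+1+i)).totient : ℚ)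
        = ((p:ℚ)^(b+1+2*(i+j+1)-i) - (p:ℚ)^(b+1+2*(i+j+1)-(i+1)))
          - ((p:ℚ)^(b+(i+1)) - (p:ℚ)^(b+i))
      rw [show 2*(b+1+(i+j+1) - max b (b+1+i)) = 2*(j+1) from by omega,
        show b+1+2*(i+j+1)-i = (b+i+2*j+2)+1 from by omega,
        show b+1+2*(i+j+1)-(i+1) = b+i+2*j+2 from by omega,
        show b+1+i = (b+i)+1 from by omega,
        tot_cast hp (b+i)]
      ring
    rw [Finset.sum_congr rfl key, Finset.sum_sub_distrib,
      Finset.sum_range_sub' (fun i => (p:ℚ)^(b+1+2*L-i)) L,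
      Finset.sum_range_sub (fun i => (p:ℚ)^(b+i)) L]
    show (p:ℚ)^(b+1+2*L-0) - (p:ℚ)^(b+1+2*L-L) - ((p:ℚ)^(b+L) - (p:ℚ)^(b+0))
      = (p:ℚ)^(b+1+2*L) - (p:ℚ)^(b+1+L) - ((p:ℚ)^(b+L) - (p:ℚ)^b)
    rw [show b+1+2*L-0 = b+1+2*L from by omega, show b+1+2*L-L = b+1+L from by omega,
      show b+0 = b from by omega]
  rw [h1, h2]
  ring

end helpers
open Finset

def ξ1e (p : ℕ) : ℚ := if p % 4 = 1 then 0 else 1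
def ξ3e (p : ℕ) : ℚ := if p % 3 = 1 then 0 else 1
def ke (p : ℕ) : ℚ := ((p : ℚ) - 1) / 12 - ξ1e p / 2 - ξ3e p / 3
def Ke (p : ℕ) : ℚ :=
  6 * ke p ^ 2 + (6 * ke p + 2) * ξ1e p + (4 * ke p + 1) * ξ3e p + 2 * ξ1e p * ξ3e p
def ce (p : ℕ) : ℚ := ((p : ℚ) - 1) / 12

lemma matA'_CC (p n a a' : ℕ) : matA' p n (Idx2.C a) (Idx2.C a')
    = (if a = a' then
        (if a = 0 ∨ a = n then -(p:ℚ)^(n-1) * ((p:ℚ)-1)/12 - ξ1e p/2 - ξ3e p/3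
         else -(p:ℚ)^(((n:ℤ) - 2*(a:ℤ)).natAbs)/6 - 1/2 - 1/3)
       else if 0 < ((n:ℤ) - 2*(a:ℤ)) * ((n:ℤ) - 2*(a':ℤ)) then
         ke p * (p:ℚ)^(min ((n:ℤ) - 2*(a:ℤ)).natAbs ((n:ℤ) - 2*(a':ℤ)).natAbs)
           + ξ1e p * ((p:ℚ)^(min ((n:ℤ) - 2*(a:ℤ)).natAbs ((n:ℤ) - 2*(a':ℤ)).natAbs) - 1)/2
           + ξ3e p * ((p:ℚ)^(min ((n:ℤ) - 2*(a:ℤ)).natAbs ((n:ℤ) - 2*(a':ℤ)).natAbs) - 1)/3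
       else ke p)
      + 6*(ke p)^2 + (6*(ke p)+2)*(ξ1e p) + (4*(ke p)+1)*(ξ3e p) + 2*(ξ1e p)*(ξ3e p) := rfl

/-- Evaluation of the half-sum containing the diagonal term. -/
lemma coreSum {p : ℕ} (hp : p.Prime) (b Lb M : ℕ) (hM : M = b+1+Lb) (D : ℚ) (f : ℕ → ℚ)
    (hf : ∀ b' < b+1+Lb, b' ≠ b →
      f b' = ce p * ((p:ℚ)^(2*(b+1+Lb - max b b')) - 1) + (ke p + Ke p))
    (hfb : f b = D) :
    ∑ b' ∈ Finset.range M, f b' * ((p^b').totient : ℚ)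
      = ce p * ((p:ℚ)^(b+2+2*Lb) + (p:ℚ)^(b+1+2*Lb) - (p:ℚ)^(b+1+Lb) - (p:ℚ)^(b+Lb))
        + (ke p + Ke p) * (p:ℚ)^(b+Lb)
        + (D - (ce p * ((p:ℚ)^(2*(1+Lb)) - 1) + (ke p + Ke p))) * ((p^b).totient : ℚ) := by
  subst hM
  have key : ∀ b' ∈ Finset.range (b+1+Lb), f b' * ((p^b').totient : ℚ)
      = (ce p * (((p:ℚ)^(2*(b+1+Lb - max b b')) - 1) * ((p^b').totient : ℚ))
          + (ke p + Ke p) * ((p^b').totient : ℚ))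
        + (if b' = b then
            (D - (ce p * ((p:ℚ)^(2*(1+Lb)) - 1) + (ke p + Ke p))) * ((p^b').totient : ℚ)
          else 0) := by
    intro b' hb'
    rw [Finset.mem_range] at hb'
    by_cases hbb : b' = b
    · rw [if_pos hbb, hbb, hfb, show 2*(b+1+Lb - max b b) = 2*(1+Lb) from by omega]
      ring
    · rw [if_neg hbb, hf b' hb' hbb]
      ring
  rw [Finset.sum_congr rfl key, Finset.sum_add_distrib, Finset.sum_ite_eq',
    if_pos (by rw [Finset.mem_range]; omega : b ∈ Finset.range (b+1+Lb)),
    Finset.sum_add_distrib, ← Finset.mul_sum, ← Finset.mul_sum, lemB hp b Lb,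
    show b+1+Lb = (b+Lb)+1 from by omega, tot_sum hp]

/-- Evaluation of the constant half-sum. -/
lemma constSum {p : ℕ} (hp : p.Prime) (M N : ℕ) (hM : M = N+1) (f : ℕ → ℚ)
    (hf : ∀ b' < M, f b' = ke p + Ke p) :
    ∑ b' ∈ Finset.range M, f b' * ((p^b').totient : ℚ) = (ke p + Ke p) * (p:ℚ)^N := by
  subst hM
  rw [Finset.sum_congr rfl (fun b' hb' => by rw [hf b' (Finset.mem_range.mp hb')]),
    ← Finset.mul_sum, tot_sum hp]

lemma Tn_eq (m : ℕ) : (Finset.range (2*m+1)).erase m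
    = Finset.range m ∪ (Finset.range m).image (fun b => 2*m - b) := by
  ext x
  simp only [Finset.mem_erase, Finset.mem_range, Finset.mem_union, Finset.mem_image]
  constructor
  · rintro ⟨hx1, hx2⟩
    rcases lt_or_ge x m with h | h
    · exact Or.inl h
    · exact Or.inr ⟨2*m - x, by omega, by omega⟩
  · rintro (h | ⟨b, hb, rfl⟩) <;> omega

lemma Tn_disj (m : ℕ) :
    Disjoint (Finset.range m) ((Finset.range m).image (fun b => 2*m - b)) := by
  rw [Finset.disjoint_left]
  intro x hx hmem
  rw [Finset.mem_range] at hx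
  simp only [Finset.mem_image, Finset.mem_range] at hmem
  obtain ⟨b, hb, hbe⟩ := hmem
  omega

lemma disj_img {α : Type*} [DecidableEq α] (s t : Finset ℕ) (f g : ℕ → α)
    (h : ∀ x y, f x ≠ g y) : Disjoint (s.image f) (t.image g) := by
  rw [Finset.disjoint_left]
  intro x hx hx'
  simp only [Finset.mem_image] at hx hx'
  obtain ⟨a, _, rfl⟩ := hx
  obtain ⟨b, _, hb⟩ := hx'
  exact h a b hb.symm

lemma sum_Sset2 (p n : ℕ) (Γ : Idx2) :
    ∑ Γ' ∈ Sset2 p n, matA' p n Γ Γ' * wvec2 p n Γ' =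
      (∑ a' ∈ (Finset.range (n+1)).erase (n/2),
        matA' p n Γ (Idx2.C a') * wvec2 p n (Idx2.C a'))
      + (if p % 4 = 1 then ∑ a' ∈ (Finset.Icc 1 (n-1)).erase (n/2),
          matA' p n Γ (Idx2.E a') * wvec2 p n (Idx2.E a') else 0)
      + (if p % 3 = 1 then ∑ a' ∈ (Finset.Icc 1 (n-1)).erase (n/2),
          matA' p n Γ (Idx2.F a') * wvec2 p n (Idx2.F a') else 0) := by
  have dCE : Disjoint (((Finset.range (n+1)).erase (n/2)).image Idx2.C)
      (if p % 4 = 1 then ((Finset.Icc 1 (n-1)).erase (n/2)).image Idx2.E else ∅) := by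
    split_ifs
    · exact disj_img _ _ _ _ (fun x y h => Idx2.noConfusion h)
    · exact Finset.disjoint_empty_right _
  have dCF : Disjoint (((Finset.range (n+1)).erase (n/2)).image Idx2.C)
      (if p % 3 = 1 then ((Finset.Icc 1 (n-1)).erase (n/2)).image Idx2.F else ∅) := by
    split_ifs
    · exact disj_img _ _ _ _ (fun x y h => Idx2.noConfusion h)
    · exact Finset.disjoint_empty_right _
  have dEF : Disjoint (if p % 4 = 1 then ((Finset.Icc 1 (n-1)).erase (n/2)).image Idx2.E else ∅)
      (if p % 3 = 1 then ((Finset.Icc 1 (n-1)).erase (n/2)).image Idx2.F else ∅) := by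
    split_ifs
    · exact disj_img _ _ _ _ (fun x y h => Idx2.noConfusion h)
    · exact Finset.disjoint_empty_right _
    · exact Finset.disjoint_empty_left _
    · exact Finset.disjoint_empty_left _
  show ∑ Γ' ∈ _ ∪ _ ∪ _, _ = _
  rw [Finset.sum_union (Finset.disjoint_union_left.mpr ⟨dCF, dEF⟩), Finset.sum_union dCE]
  congr 1
  · congr 1
    · exact Finset.sum_image (fun x _ y _ h => by injection h)
    · split_ifs
      · exact Finset.sum_image (fun x _ y _ h => by injection h)
      · exact Finset.sum_empty
  · split_ifs
    · exact Finset.sum_image (fun x _ y _ h => by injection h)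
    · exact Finset.sum_empty

lemma memC {p n a : ℕ} (h : Idx2.C a ∈ Sset2 p n) :
    a ∈ (Finset.range (n+1)).erase (n/2) := by
  simp only [Sset2, Finset.mem_union, Finset.mem_image] at h
  rcases h with (⟨b, hb, hbe⟩ | h) | h
  · injection hbe with hh; subst hh; exact hb
  · exfalso; revert h; split_ifs <;> simp
  · exfalso; revert h; split_ifs <;> simp

lemma memE {p n a : ℕ} (h : Idx2.E a ∈ Sset2 p n) :
    p % 4 = 1 ∧ a ∈ (Finset.Icc 1 (n-1)).erase (n/2) := by
  simp only [Sset2, Finset.mem_union, Finset.mem_image] at h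
  rcases h with (⟨b, hb, hbe⟩ | h) | h
  · exact absurd hbe (by simp)
  · by_cases h4 : p % 4 = 1
    · rw [if_pos h4] at h
      simp only [Finset.mem_image] at h
      obtain ⟨b, hb, hbe⟩ := h
      injection hbe with hh; subst hh
      exact ⟨h4, hb⟩
    · rw [if_neg h4] at h; simp at h
  · exfalso; revert h; split_ifs <;> simp

lemma memF {p n a : ℕ} (h : Idx2.F a ∈ Sset2 p n) :
    p % 3 = 1 ∧ a ∈ (Finset.Icc 1 (n-1)).erase (n/2) := by
  simp only [Sset2, Finset.mem_union, Finset.mem_image] at h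
  rcases h with (⟨b, hb, hbe⟩ | h) | h
  · exact absurd hbe (by simp)
  · exfalso; revert h; split_ifs <;> simp
  · by_cases h3 : p % 3 = 1
    · rw [if_pos h3] at h
      simp only [Finset.mem_image] at h
      obtain ⟨b, hb, hbe⟩ := h
      injection hbe with hh; subst hh
      exact ⟨h3, hb⟩
    · rw [if_neg h3] at h; simp at h

lemma rowE (p n : ℕ) (h4 : p % 4 = 1) (a : ℕ)
    (ha : a ∈ (Finset.Icc 1 (n-1)).erase (n/2)) :
    ∑ Γ' ∈ Sset2 p n, matA' p n (Idx2.E a) Γ' * wvec2 p n Γ' = 0 := by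
  have haT : a ∈ (Finset.range (n+1)).erase (n/2) := by
    simp only [Finset.mem_erase, Finset.mem_Icc] at ha
    simp only [Finset.mem_erase, Finset.mem_range]
    omega
  rw [sum_Sset2, if_pos h4]
  have h1 : ∑ a' ∈ (Finset.range (n+1)).erase (n/2),
      matA' p n (Idx2.E a) (Idx2.C a') * wvec2 p n (Idx2.C a') = wvec2 p n (Idx2.C a) := by
    have pt : ∀ a' ∈ (Finset.range (n+1)).erase (n/2),
        matA' p n (Idx2.E a) (Idx2.C a') * wvec2 p n (Idx2.C a')
        = if a' = a then wvec2 p n (Idx2.C a') else 0 := by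
      intro a' _
      show (if a' = a then (1:ℚ) else 0) * _ = _
      split_ifs <;> ring
    rw [Finset.sum_congr rfl pt, Finset.sum_ite_eq', if_pos haT]
  have h2 : ∑ a' ∈ (Finset.Icc 1 (n-1)).erase (n/2),
      matA' p n (Idx2.E a) (Idx2.E a') * wvec2 p n (Idx2.E a')
      = -2 * wvec2 p n (Idx2.E a) := by
    have pt : ∀ a' ∈ (Finset.Icc 1 (n-1)).erase (n/2),
        matA' p n (Idx2.E a) (Idx2.E a') * wvec2 p n (Idx2.E a')
        = if a = a' then -2 * wvec2 p n (Idx2.E a') else 0 := by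
      intro a' _
      show (if a = a' then (-2:ℚ) else 0) * _ = _
      split_ifs <;> ring
    rw [Finset.sum_congr rfl pt, Finset.sum_ite_eq, if_pos ha]
  have h3 : ∑ a' ∈ (Finset.Icc 1 (n-1)).erase (n/2),
      matA' p n (Idx2.E a) (Idx2.F a') * wvec2 p n (Idx2.F a') = 0 :=
    Finset.sum_eq_zero (fun a' _ => by show (0:ℚ) * _ = 0; ring)
  rw [h1, h2, h3]
  show ((p ^ min a (n - a)).totient : ℚ)
      + -2 * (((p ^ min a (n - a)).totient : ℚ) / 2) + (if p % 3 = 1 then (0:ℚ) else 0) = 0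
  rw [ite_self]
  ring

lemma rowF (p n : ℕ) (h3 : p % 3 = 1) (a : ℕ)
    (ha : a ∈ (Finset.Icc 1 (n-1)).erase (n/2)) :
    ∑ Γ' ∈ Sset2 p n, matA' p n (Idx2.F a) Γ' * wvec2 p n Γ' = 0 := by
  have haT : a ∈ (Finset.range (n+1)).erase (n/2) := by
    simp only [Finset.mem_erase, Finset.mem_Icc] at ha
    simp only [Finset.mem_erase, Finset.mem_range]
    omega
  rw [sum_Sset2, if_pos h3]
  have h1 : ∑ a' ∈ (Finset.range (n+1)).erase (n/2),
      matA' p n (Idx2.F a) (Idx2.C a') * wvec2 p n (Idx2.C a') = wvec2 p n (Idx2.C a) := by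
    have pt : ∀ a' ∈ (Finset.range (n+1)).erase (n/2),
        matA' p n (Idx2.F a) (Idx2.C a') * wvec2 p n (Idx2.C a')
        = if a' = a then wvec2 p n (Idx2.C a') else 0 := by
      intro a' _
      show (if a' = a then (1:ℚ) else 0) * _ = _
      split_ifs <;> ring
    rw [Finset.sum_congr rfl pt, Finset.sum_ite_eq', if_pos haT]
  have h2 : ∑ a' ∈ (Finset.Icc 1 (n-1)).erase (n/2),
      matA' p n (Idx2.F a) (Idx2.E a') * wvec2 p n (Idx2.E a') = 0 :=
    Finset.sum_eq_zero (fun a' _ => by show (0:ℚ) * _ = 0; ring)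
  have h2' : ∑ a' ∈ (Finset.Icc 1 (n-1)).erase (n/2),
      matA' p n (Idx2.F a) (Idx2.F a') * wvec2 p n (Idx2.F a')
      = -3 * wvec2 p n (Idx2.F a) := by
    have pt : ∀ a' ∈ (Finset.Icc 1 (n-1)).erase (n/2),
        matA' p n (Idx2.F a) (Idx2.F a') * wvec2 p n (Idx2.F a')
        = if a = a' then -3 * wvec2 p n (Idx2.F a') else 0 := by
      intro a' _
      show (if a = a' then (-3:ℚ) else 0) * _ = _
      split_ifs <;> ring
    rw [Finset.sum_congr rfl pt, Finset.sum_ite_eq, if_pos ha]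
  rw [h1, h2, h2']
  show ((p ^ min a (n - a)).totient : ℚ) + (if p % 4 = 1 then (0:ℚ) else 0)
      + -3 * (((p ^ min a (n - a)).totient : ℚ) / 3) = 0
  rw [ite_self]
  ring
lemma rowC (p m a : ℕ) (hp : p.Prime) (hm1 : 1 ≤ m) (ham : a ≠ m) (han : a ≤ 2*m) :
    ∑ Γ' ∈ Sset2 p (2*m), matA' p (2*m) (Idx2.C a) Γ' * wvec2 p (2*m) Γ' = 0 := by
  have hn2 : 2*m/2 = m := by omega
  rw [sum_Sset2, hn2]
  have hEsum : ∑ a' ∈ (Finset.Icc 1 (2*m-1)).erase m,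
      matA' p (2*m) (Idx2.C a) (Idx2.E a') * wvec2 p (2*m) (Idx2.E a')
      = if a ∈ (Finset.Icc 1 (2*m-1)).erase m
        then ((p ^ min a (2*m - a)).totient : ℚ) / 2 else 0 := by
    have pt : ∀ a' ∈ (Finset.Icc 1 (2*m-1)).erase m,
        matA' p (2*m) (Idx2.C a) (Idx2.E a') * wvec2 p (2*m) (Idx2.E a')
        = if a = a' then ((p ^ min a' (2*m - a')).totient : ℚ) / 2 else 0 := by
      intro a' _
      show (if a = a' then (1:ℚ) else 0) * (((p ^ min a' (2*m - a')).totient : ℚ) / 2) = _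
      split_ifs <;> ring
    rw [Finset.sum_congr rfl pt, Finset.sum_ite_eq]
  have hFsum : ∑ a' ∈ (Finset.Icc 1 (2*m-1)).erase m,
      matA' p (2*m) (Idx2.C a) (Idx2.F a') * wvec2 p (2*m) (Idx2.F a')
      = if a ∈ (Finset.Icc 1 (2*m-1)).erase m
        then ((p ^ min a (2*m - a)).totient : ℚ) / 3 else 0 := by
    have pt : ∀ a' ∈ (Finset.Icc 1 (2*m-1)).erase m,
        matA' p (2*m) (Idx2.C a) (Idx2.F a') * wvec2 p (2*m) (Idx2.F a')
        = if a = a' then ((p ^ min a' (2*m - a')).totient : ℚ) / 3 else 0 := by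
      intro a' _
      show (if a = a' then (1:ℚ) else 0) * (((p ^ min a' (2*m - a')).totient : ℚ) / 3) = _
      split_ifs <;> ring
    rw [Finset.sum_congr rfl pt, Finset.sum_ite_eq]
  rw [hEsum, hFsum]
  have hsplit : ∑ a' ∈ (Finset.range (2*m+1)).erase m,
      matA' p (2*m) (Idx2.C a) (Idx2.C a') * wvec2 p (2*m) (Idx2.C a')
      = (∑ a' ∈ Finset.range m,
          matA' p (2*m) (Idx2.C a) (Idx2.C a') * ((p^a').totient : ℚ))
        + ∑ x ∈ Finset.range m,
          matA' p (2*m) (Idx2.C a) (Idx2.C (2*m - x)) * ((p^x).totient : ℚ) := by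
    rw [Tn_eq m, Finset.sum_union (Tn_disj m)]
    congr 1
    · apply Finset.sum_congr rfl
      intro a' ha'
      rw [Finset.mem_range] at ha'
      show _ * ((p ^ min a' (2*m - a')).totient : ℚ) = _
      rw [show min a' (2*m - a') = a' from by omega]
    · rw [Finset.sum_image (fun x hx y hy h => by
        simp only [Finset.mem_coe, Finset.mem_range] at hx hy; omega)]
      apply Finset.sum_congr rfl
      intro x hx
      rw [Finset.mem_range] at hx
      show _ * ((p ^ min (2*m - x) (2*m - (2*m - x))).totient : ℚ) = _
      rw [show min (2*m - x) (2*m - (2*m - x)) = x from by omega]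
  rw [hsplit]
  rcases Nat.lt_or_ge a m with hlt | hge
  · -- a < m : diagonal in the first half-sum
    obtain ⟨La, rfl⟩ : ∃ L, m = a + 1 + L := ⟨m - a - 1, by omega⟩
    have hf : ∀ b' < a+1+La, b' ≠ a →
        matA' p (2*(a+1+La)) (Idx2.C a) (Idx2.C b')
        = ce p * ((p:ℚ)^(2*(a+1+La - max a b')) - 1) + (ke p + Ke p) := by
      intro b' hb' hne
      have h1 : (0:ℤ) < ((2*(a+1+La):ℕ):ℤ) - 2*(a:ℤ) := by omega
      have h2 : (0:ℤ) < ((2*(a+1+La):ℕ):ℤ) - 2*(b':ℤ) := by omega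
      rw [matA'_CC, if_neg (fun h => hne h.symm), if_pos (mul_pos h1 h2),
        show min (((2*(a+1+La):ℕ):ℤ) - 2*(a:ℤ)).natAbs
            (((2*(a+1+La):ℕ):ℤ) - 2*(b':ℤ)).natAbs
          = 2*(a+1+La - max a b') from by omega]
      simp only [ce, ke, Ke]
      ring
    have hg : ∀ b' < a+1+La,
        matA' p (2*(a+1+La)) (Idx2.C a) (Idx2.C (2*(a+1+La) - b')) = ke p + Ke p := by
      intro b' hb'
      have hne : a ≠ 2*(a+1+La) - b' := by omega
      have h1 : (0:ℤ) < ((2*(a+1+La):ℕ):ℤ) - 2*(a:ℤ) := by omega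
      have h2 : ((2*(a+1+La):ℕ):ℤ) - 2*(((2*(a+1+La) - b' : ℕ)):ℤ) < 0 := by omega
      rw [matA'_CC, if_neg hne,
        if_neg (not_lt.mpr (le_of_lt (mul_neg_of_pos_of_neg h1 h2)))]
      simp only [Ke]
      ring
    have hC2 : ∑ x ∈ Finset.range (a+1+La),
        matA' p (2*(a+1+La)) (Idx2.C a) (Idx2.C (2*(a+1+La) - x)) * ((p^x).totient : ℚ)
        = (ke p + Ke p) * (p:ℚ)^(a+La) :=
      constSum hp (a+1+La) (a+La) (by omega) _ hg
    rw [hC2]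
    rcases Nat.eq_zero_or_pos a with rfl | hapos
    · -- a = 0
      have hfb : matA' p (2*(0+1+La)) (Idx2.C 0) (Idx2.C 0)
          = -(p:ℚ)^(2*La+1) * ((p:ℚ)-1)/12 - ξ1e p/2 - ξ3e p/3
            + 6*(ke p)^2 + (6*(ke p)+2)*(ξ1e p) + (4*(ke p)+1)*(ξ3e p)
            + 2*(ξ1e p)*(ξ3e p) := by
        rw [matA'_CC, if_pos rfl, if_pos (Or.inl rfl),
          show 2*(0+1+La)-1 = 2*La+1 from by omega]
      have hC1 : ∑ a' ∈ Finset.range (0+1+La),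
          matA' p (2*(0+1+La)) (Idx2.C 0) (Idx2.C a') * ((p^a').totient : ℚ)
          = ce p * ((p:ℚ)^(0+2+2*La) + (p:ℚ)^(0+1+2*La) - (p:ℚ)^(0+1+La) - (p:ℚ)^(0+La))
            + (ke p + Ke p) * (p:ℚ)^(0+La)
            + ((-(p:ℚ)^(2*La+1) * ((p:ℚ)-1)/12 - ξ1e p/2 - ξ3e p/3
                + 6*(ke p)^2 + (6*(ke p)+2)*(ξ1e p) + (4*(ke p)+1)*(ξ3e p)
                + 2*(ξ1e p)*(ξ3e p))
              - (ce p * ((p:ℚ)^(2*(1+La)) - 1) + (ke p + Ke p))) * ((p^0).totient : ℚ) :=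
        coreSum hp 0 La (0+1+La) rfl _ _ hf hfb
      rw [hC1, show ((p^0).totient : ℚ) = 1 from by norm_num]
      have hnm : (0:ℕ) ∉ (Finset.Icc 1 (2*(0+1+La)-1)).erase (0+1+La) := by
        simp only [Finset.mem_erase, Finset.mem_Icc]
        omega
      rw [if_neg hnm, if_neg hnm, ite_self, ite_self]
      by_cases h4 : p % 4 = 1 <;> by_cases h3 : p % 3 = 1 <;>
        simp only [ce, ke, Ke, ξ1e, ξ3e, h4, h3, reduceIte, if_true, if_false] <;>
        ring
    · -- 0 < a < m
      obtain ⟨A, rfl⟩ : ∃ A, a = A+1 := ⟨a-1, by omega⟩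
      have hfb : matA' p (2*(A+1+1+La)) (Idx2.C (A+1)) (Idx2.C (A+1))
          = -(p:ℚ)^(2*(1+La))/6 - 1/2 - 1/3
            + 6*(ke p)^2 + (6*(ke p)+2)*(ξ1e p) + (4*(ke p)+1)*(ξ3e p)
            + 2*(ξ1e p)*(ξ3e p) := by
        rw [matA'_CC, if_pos rfl, if_neg (by omega : ¬(A+1 = 0 ∨ A+1 = 2*(A+1+1+La))),
          show (((2*(A+1+1+La):ℕ):ℤ) - 2*((A+1:ℕ):ℤ)).natAbs = 2*(1+La) from by omega]
      have hC1 : ∑ a' ∈ Finset.range (A+1+1+La),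
          matA' p (2*(A+1+1+La)) (Idx2.C (A+1)) (Idx2.C a') * ((p^a').totient : ℚ)
          = ce p * ((p:ℚ)^(A+1+2+2*La) + (p:ℚ)^(A+1+1+2*La) - (p:ℚ)^(A+1+1+La)
              - (p:ℚ)^(A+1+La))
            + (ke p + Ke p) * (p:ℚ)^(A+1+La)
            + ((-(p:ℚ)^(2*(1+La))/6 - 1/2 - 1/3
                + 6*(ke p)^2 + (6*(ke p)+2)*(ξ1e p) + (4*(ke p)+1)*(ξ3e p)
                + 2*(ξ1e p)*(ξ3e p))
              - (ce p * ((p:ℚ)^(2*(1+La)) - 1) + (ke p + Ke p))) * ((p^(A+1)).totient : ℚ) :=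
        coreSum hp (A+1) La (A+1+1+La) rfl _ _ hf hfb
      rw [hC1]
      have hmm : (A+1) ∈ (Finset.Icc 1 (2*(A+1+1+La)-1)).erase (A+1+1+La) := by
        simp only [Finset.mem_erase, Finset.mem_Icc]
        omega
      rw [if_pos hmm, if_pos hmm,
        show min (A+1) (2*(A+1+1+La) - (A+1)) = A+1 from by omega,
        tot_cast hp A]
      by_cases h4 : p % 4 = 1 <;> by_cases h3 : p % 3 = 1 <;>
        simp only [ce, ke, Ke, ξ1e, ξ3e, h4, h3, reduceIte, if_true, if_false] <;>
        ring
  · -- a > m : diagonal in the second half-sum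
    obtain ⟨b, Lb, rfl, rfl⟩ : ∃ b Lb, m = b + 1 + Lb ∧ a = b + 2*Lb + 2 :=
      ⟨2*m - a, a - m - 1, by omega, by omega⟩
    have hf1 : ∀ b' < b+1+Lb,
        matA' p (2*(b+1+Lb)) (Idx2.C (b+2*Lb+2)) (Idx2.C b') = ke p + Ke p := by
      intro b' hb'
      have hne : b+2*Lb+2 ≠ b' := by omega
      have h1 : ((2*(b+1+Lb):ℕ):ℤ) - 2*((b+2*Lb+2 : ℕ):ℤ) < 0 := by omega
      have h2 : (0:ℤ) < ((2*(b+1+Lb):ℕ):ℤ) - 2*(b':ℤ) := by omega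
      rw [matA'_CC, if_neg hne,
        if_neg (not_lt.mpr (le_of_lt (mul_neg_of_neg_of_pos h1 h2)))]
      simp only [Ke]
      ring
    have hf2 : ∀ b' < b+1+Lb, b' ≠ b →
        matA' p (2*(b+1+Lb)) (Idx2.C (b+2*Lb+2)) (Idx2.C (2*(b+1+Lb) - b'))
        = ce p * ((p:ℚ)^(2*(b+1+Lb - max b b')) - 1) + (ke p + Ke p) := by
      intro b' hb' hne
      have hne' : b+2*Lb+2 ≠ 2*(b+1+Lb) - b' := by omega
      have h1 : ((2*(b+1+Lb):ℕ):ℤ) - 2*((b+2*Lb+2 : ℕ):ℤ) < 0 := by omega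
      have h2 : ((2*(b+1+Lb):ℕ):ℤ) - 2*((2*(b+1+Lb) - b' : ℕ):ℤ) < 0 := by omega
      rw [matA'_CC, if_neg hne', if_pos (mul_pos_of_neg_of_neg h1 h2),
        show min (((2*(b+1+Lb):ℕ):ℤ) - 2*((b+2*Lb+2 : ℕ):ℤ)).natAbs
            (((2*(b+1+Lb):ℕ):ℤ) - 2*((2*(b+1+Lb) - b' : ℕ):ℤ)).natAbs
          = 2*(b+1+Lb - max b b') from by omega]
      simp only [ce, ke, Ke]
      ring
    have hC1 : ∑ a' ∈ Finset.range (b+1+Lb),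
        matA' p (2*(b+1+Lb)) (Idx2.C (b+2*Lb+2)) (Idx2.C a') * ((p^a').totient : ℚ)
        = (ke p + Ke p) * (p:ℚ)^(b+Lb) :=
      constSum hp (b+1+Lb) (b+Lb) (by omega) _ hf1
    rw [hC1]
    rcases Nat.eq_zero_or_pos b with rfl | hbpos
    · -- b = 0, i.e. a = n
      have hfb : matA' p (2*(0+1+Lb)) (Idx2.C (0+2*Lb+2)) (Idx2.C (2*(0+1+Lb) - 0))
          = -(p:ℚ)^(2*Lb+1) * ((p:ℚ)-1)/12 - ξ1e p/2 - ξ3e p/3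
            + 6*(ke p)^2 + (6*(ke p)+2)*(ξ1e p) + (4*(ke p)+1)*(ξ3e p)
            + 2*(ξ1e p)*(ξ3e p) := by
        rw [matA'_CC, if_pos (by omega : 0+2*Lb+2 = 2*(0+1+Lb) - 0),
          if_pos (Or.inr (by omega : 0+2*Lb+2 = 2*(0+1+Lb))),
          show 2*(0+1+Lb)-1 = 2*Lb+1 from by omega]
      have hC2 : ∑ x ∈ Finset.range (0+1+Lb),
          matA' p (2*(0+1+Lb)) (Idx2.C (0+2*Lb+2)) (Idx2.C (2*(0+1+Lb) - x))
            * ((p^x).totient : ℚ)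
          = ce p * ((p:ℚ)^(0+2+2*Lb) + (p:ℚ)^(0+1+2*Lb) - (p:ℚ)^(0+1+Lb) - (p:ℚ)^(0+Lb))
            + (ke p + Ke p) * (p:ℚ)^(0+Lb)
            + ((-(p:ℚ)^(2*Lb+1) * ((p:ℚ)-1)/12 - ξ1e p/2 - ξ3e p/3
                + 6*(ke p)^2 + (6*(ke p)+2)*(ξ1e p) + (4*(ke p)+1)*(ξ3e p)
                + 2*(ξ1e p)*(ξ3e p))
              - (ce p * ((p:ℚ)^(2*(1+Lb)) - 1) + (ke p + Ke p))) * ((p^0).totient : ℚ) :=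
        coreSum hp 0 Lb (0+1+Lb) rfl _ _ hf2 hfb
      rw [hC2, show ((p^0).totient : ℚ) = 1 from by norm_num]
      have hnm : (0+2*Lb+2 : ℕ) ∉ (Finset.Icc 1 (2*(0+1+Lb)-1)).erase (0+1+Lb) := by
        simp only [Finset.mem_erase, Finset.mem_Icc]
        omega
      rw [if_neg hnm, if_neg hnm, ite_self, ite_self]
      by_cases h4 : p % 4 = 1 <;> by_cases h3 : p % 3 = 1 <;>
        simp only [ce, ke, Ke, ξ1e, ξ3e, h4, h3, reduceIte, if_true, if_false] <;>
        ring
    · -- 0 < b, i.e. m < a < n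
      obtain ⟨B, rfl⟩ : ∃ B, b = B+1 := ⟨b-1, by omega⟩
      have hfb : matA' p (2*(B+1+1+Lb)) (Idx2.C (B+1+2*Lb+2))
          (Idx2.C (2*(B+1+1+Lb) - (B+1)))
          = -(p:ℚ)^(2*(1+Lb))/6 - 1/2 - 1/3
            + 6*(ke p)^2 + (6*(ke p)+2)*(ξ1e p) + (4*(ke p)+1)*(ξ3e p)
            + 2*(ξ1e p)*(ξ3e p) := by
        rw [matA'_CC, if_pos (by omega : B+1+2*Lb+2 = 2*(B+1+1+Lb) - (B+1)),
          if_neg (by omega : ¬(B+1+2*Lb+2 = 0 ∨ B+1+2*Lb+2 = 2*(B+1+1+Lb))),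
          show (((2*(B+1+1+Lb):ℕ):ℤ) - 2*((B+1+2*Lb+2 : ℕ):ℤ)).natAbs
            = 2*(1+Lb) from by omega]
      have hC2 : ∑ x ∈ Finset.range (B+1+1+Lb),
          matA' p (2*(B+1+1+Lb)) (Idx2.C (B+1+2*Lb+2)) (Idx2.C (2*(B+1+1+Lb) - x))
            * ((p^x).totient : ℚ)
          = ce p * ((p:ℚ)^(B+1+2+2*Lb) + (p:ℚ)^(B+1+1+2*Lb) - (p:ℚ)^(B+1+1+Lb)
              - (p:ℚ)^(B+1+Lb))
            + (ke p + Ke p) * (p:ℚ)^(B+1+Lb)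
            + ((-(p:ℚ)^(2*(1+Lb))/6 - 1/2 - 1/3
                + 6*(ke p)^2 + (6*(ke p)+2)*(ξ1e p) + (4*(ke p)+1)*(ξ3e p)
                + 2*(ξ1e p)*(ξ3e p))
              - (ce p * ((p:ℚ)^(2*(1+Lb)) - 1) + (ke p + Ke p))) * ((p^(B+1)).totient : ℚ) :=
        coreSum hp (B+1) Lb (B+1+1+Lb) rfl _ _ hf2 hfb
      rw [hC2]
      have hmm : (B+1+2*Lb+2 : ℕ) ∈ (Finset.Icc 1 (2*(B+1+1+Lb)-1)).erase (B+1+1+Lb) := by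
        simp only [Finset.mem_erase, Finset.mem_Icc]
        omega
      rw [if_pos hmm, if_pos hmm,
        show min (B+1+2*Lb+2) (2*(B+1+1+Lb) - (B+1+2*Lb+2)) = B+1 from by omega,
        tot_cast hp B]
      by_cases h4 : p % 4 = 1 <;> by_cases h3 : p % 3 = 1 <;>
        simp only [ce, ke, Ke, ξ1e, ξ3e, h4, h3, reduceIte, if_true, if_false] <;>
        ring

theorem stmt_14 (p n : ℕ) (hp : p.Prime) (hp3 : 3 < p) (hn : 2 ≤ n) (hev : Even n) :
    ∀ Γ ∈ Sset2 p n, ∑ Γ' ∈ Sset2 p n, matA' p n Γ Γ' * wvec2 p n Γ' = 0 := by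
  intro Γ hΓ
  obtain ⟨m, hm2⟩ := hev
  have hm' : n = 2*m := by omega
  subst hm'
  rcases Γ with a | a | a
  · have ha := memC hΓ
    rw [Finset.mem_erase, Finset.mem_range] at ha
    have ham : a ≠ m := by
      have := ha.1
      omega
    exact rowC p m a hp (by omega) ham (by have := ha.2; omega)
  · obtain ⟨h4, ha⟩ := memE hΓ
    exact rowE p (2*m) h4 a ha
  · obtain ⟨h3, ha⟩ := memF hΓ
    exact rowF p (2*m) h3 a ha
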